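/- Let a, b ∈ ℝ_{++}ⁿ be strictly positive probability vectors, C ∈ ℝ₊^{n×n}, γ > 0. For any f ∈ ℝⁿ, let f^{(C,γ)} ∈ ℝⁿ be its (C,γ)-transform, i.e. f^{(C,γ)}_j = γ log b_j − γ log Σ_{i=1}^n exp((f_i − C_{ij})/γ) for each j. Then max_j (f^{(C,γ)}_j − γ log b_j) − min_j (f^{(C,γ)}_j − γ log b_j) ≤ max_{i,j} C_{ij} − min_{i,j} C_{ij} ≤ ‖C‖_∞. -/
import Mathlib


/-- **Equicontinuity of the (C,γ)-transform** (Lemma 4 of the paper).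
For strictly positive probability vectors `a, b`, `C ≥ 0`, `γ > 0` and any `f`,
the `(C,γ)`-transform `F_j = γ log b_j − γ log Σ_i exp((f_i − C_{ij})/γ)` satisfies
`max_j(F_j − γ log b_j) − min_j(F_j − γ log b_j) ≤ max C − min C ≤ ‖C‖_∞`. -/
theorem c_transform_equicontinuity {n : ℕ} (hn : 0 < n)
    (a b : Fin n → ℝ) (C : Matrix (Fin n) (Fin n) ℝ) (γ : ℝ) (hγ : 0 < γ)
    (ha0 : ∀ i, 0 < a i) (hb0 : ∀ j, 0 < b j)
    (ha1 : ∑ i, a i = 1) (hb1 : ∑ j, b j = 1)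
    (hC : ∀ i j, 0 ≤ C i j)
    (f F : Fin n → ℝ)
    (hF : ∀ j, F j = γ * Real.log (b j) -
      γ * Real.log (∑ i, Real.exp ((f i - C i j) / γ))) :
    (⨆ j, (F j - γ * Real.log (b j))) - (⨅ j, (F j - γ * Real.log (b j))) ≤
        (⨆ i, ⨆ j, C i j) - (⨅ i, ⨅ j, C i j) ∧
      (⨆ i, ⨆ j, C i j) - (⨅ i, ⨅ j, C i j) ≤ ⨆ i, ⨆ j, |C i j| := by
  haveI : Nonempty (Fin n) := Fin.pos_iff_nonempty.mp hn
  set M : ℝ := (⨆ i, ⨆ j, C i j) - (⨅ i, ⨅ j, C i j) with hM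
  have bddA : ∀ (g : Fin n → ℝ), BddAbove (Set.range g) :=
    fun g => (Set.finite_range g).bddAbove
  have bddB : ∀ (g : Fin n → ℝ), BddBelow (Set.range g) :=
    fun g => (Set.finite_range g).bddBelow
  have hsupC : ∀ i j, C i j ≤ ⨆ i, ⨆ j, C i j := by
    intro i j
    exact le_trans (le_ciSup (bddA _) j) (le_ciSup (bddA fun i => ⨆ j, C i j) i)
  have hinfC : ∀ i j, (⨅ i, ⨅ j, C i j) ≤ C i j := by
    intro i j
    exact le_trans (ciInf_le (bddB fun i => ⨅ j, C i j) i) (ciInf_le (bddB _) j)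
  set S : Fin n → ℝ := fun j => ∑ i, Real.exp ((f i - C i j) / γ) with hSdef
  have hSpos : ∀ j, 0 < S j := fun j =>
    Finset.sum_pos (fun i _ => Real.exp_pos _) Finset.univ_nonempty
  set G : Fin n → ℝ := fun j => F j - γ * Real.log (b j) with hGdef
  have hG : ∀ j, G j = -(γ * Real.log (S j)) := by
    intro j; simp only [hGdef, hF j]; ring
  have key : ∀ j k, G j ≤ G k + M := by
    intro j k
    have hSle : S k ≤ Real.exp (M / γ) * S j := by
      rw [hSdef, Finset.mul_sum]
      apply Finset.sum_le_sum
      intro i _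
      rw [← Real.exp_add]
      apply Real.exp_le_exp.mpr
      have h1 : C i j - C i k ≤ M := by
        have := hsupC i j; have := hinfC i k; rw [hM]; linarith
      have h2 : (C i j - C i k) / γ ≤ M / γ := (div_le_div_iff_of_pos_right hγ).mpr h1
      have : (f i - C i k) / γ - (f i - C i j) / γ = (C i j - C i k) / γ := by
        ring
      linarith [h2, this]
    have hlog : Real.log (S k) ≤ M / γ + Real.log (S j) := by
      calc Real.log (S k) ≤ Real.log (Real.exp (M / γ) * S j) :=
            Real.log_le_log (hSpos k) hSle
        _ = M / γ + Real.log (S j) := by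
            rw [Real.log_mul (Real.exp_ne_zero _) (hSpos j).ne', Real.log_exp]
    rw [hG j, hG k]
    have := mul_le_mul_of_nonneg_left hlog hγ.le
    rw [mul_add, mul_div_cancel₀ _ hγ.ne'] at this
    linarith
  constructor
  · rw [sub_le_iff_le_add]
    apply ciSup_le
    intro j
    rw [add_comm, ← sub_le_iff_le_add]
    apply le_ciInf
    intro k
    have := key j k
    linarith
  · have h0 : 0 ≤ ⨅ i, ⨅ j, C i j :=
      le_ciInf fun i => le_ciInf fun j => hC i j
    have h1 : (⨆ i, ⨆ j, C i j) ≤ ⨆ i, ⨆ j, |C i j| := by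
      apply ciSup_le; intro i
      apply ciSup_le; intro j
      exact le_trans (le_abs_self _) (le_trans (le_ciSup (bddA fun j' => |C i j'|) j)
        (le_ciSup (bddA fun i => ⨆ j, |C i j|) i))
    linarith
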